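/- arXiv:2002.12901 — 2 statements merged into one kernel-verified Lean document; each statement's English description precedes it below -/
import Mathlib

section
/- Let h = (1 2)(3 4)⋯(2g−3 2g−2) and v = (2 3)(4 5)⋯(2g−2 2g−1) be permutations of {1,…,2g−1} for g ≥ 2. Then the commutator h⁻¹v⁻¹hv (equivalently [h,v]) is a single cycle of length 2g−1. -/
open scoped commutatorElement

private lemma Hprod_apply (m : ℕ) (x : ℕ) :
    (((List.range m).map (fun i => Equiv.swap (2 * i + 1) (2 * i + 2))).prod : Equiv.Perm ℕ) x
      = if 1 ≤ x ∧ x ≤ 2 * m then (if x % 2 = 1 then x + 1 else x - 1) else x := by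
  induction m generalizing x with
  | zero => simp only [List.range_zero, List.map_nil, List.prod_nil, Equiv.Perm.one_apply]; split_ifs <;> omega
  | succ n ih =>
    rw [List.range_succ, List.map_append, List.prod_append, List.map_singleton,
      List.prod_singleton, Equiv.Perm.mul_apply, Equiv.swap_apply_def, ih]
    split_ifs <;> omega

private lemma Vprod_apply (m : ℕ) (x : ℕ) :
    (((List.range m).map (fun i => Equiv.swap (2 * i + 2) (2 * i + 3))).prod : Equiv.Perm ℕ) x
      = if 2 ≤ x ∧ x ≤ 2 * m + 1 then (if x % 2 = 0 then x + 1 else x - 1) else x := by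
  induction m generalizing x with
  | zero => simp only [List.range_zero, List.map_nil, List.prod_nil, Equiv.Perm.one_apply]; split_ifs <;> omega
  | succ n ih =>
    rw [List.range_succ, List.map_append, List.prod_append, List.map_singleton,
      List.prod_singleton, Equiv.Perm.mul_apply, Equiv.swap_apply_def, ih]
    split_ifs <;> omega

private def cfun (g x : ℕ) : ℕ :=
  if x = 1 then 2
  else if x % 2 = 1 ∧ 3 ≤ x ∧ x ≤ 2*g-1 then x - 2
  else if x = 2*g-2 then 2*g-1
  else if x % 2 = 0 ∧ 2 ≤ x ∧ x + 4 ≤ 2*g then x + 2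
  else x

private def orb (g k : ℕ) : ℕ := if k = 0 then 1 else if k + 1 ≤ g then 2*k else 4*g - 1 - 2*k

private lemma orb_step (g : ℕ) (hg : 2 ≤ g) (c : Equiv.Perm ℕ)
    (hc : ∀ x, c x = cfun g x) (k : ℕ) (hk : k < 2*g-1) :
    c (orb g k) = orb g ((k+1) % (2*g-1)) := by
  rw [hc]
  rcases eq_or_ne (k+1) (2*g-1) with he | he
  · rw [he, Nat.mod_self]; unfold cfun orb; split_ifs <;> first | contradiction | omega
  · rw [Nat.mod_eq_of_lt (by omega)]; unfold cfun orb; split_ifs <;> first | contradiction | omega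

private lemma orb_inj (g : ℕ) (hg : 2 ≤ g) {k l : ℕ} (hk : k < 2*g-1) (hl : l < 2*g-1)
    (h : orb g k = orb g l) : k = l := by
  unfold orb at h; split_ifs at h <;> omega

private lemma orb_surj (g : ℕ) (hg : 2 ≤ g) (y : ℕ) (hy1 : 1 ≤ y) (hy2 : y ≤ 2*g-1) :
    ∃ k, k < 2*g-1 ∧ orb g k = y := by
  rcases Nat.even_or_odd y with ⟨j, rfl⟩ | ⟨j, rfl⟩
  · exact ⟨j, by omega, by unfold orb; split_ifs <;> first | contradiction | omega⟩
  · rcases Nat.eq_zero_or_pos j with rfl | hj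
    · exact ⟨0, by omega, by unfold orb; split_ifs <;> first | contradiction | omega⟩
    · exact ⟨2*g-1-j, by omega, by unfold orb; split_ifs <;> first | contradiction | omega⟩

private lemma mod_succ_eq (a n : ℕ) (hn : 2 ≤ n) : (a % n + 1) % n = (a + 1) % n := by
  conv_rhs => rw [Nat.add_mod a 1 n, Nat.mod_eq_of_lt (show 1 < n by omega)]


set_option maxHeartbeats 2000000 in
/-- For `g ≥ 2`, with `h = (1 2)(3 4)⋯(2g−3 2g−2)` and
`v = (2 3)(4 5)⋯(2g−2 2g−1)` in the symmetric group on `{1,…,2g−1}` (viewed as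
permutations of `ℕ` supported there), the commutator `[h, v]` is a single cycle
of length `2g−1`, i.e. it is a cycle whose set of moved points is exactly
`{1, …, 2g−1}`. -/
theorem commutator_of_hyperelliptic_perms_isCycle (g : ℕ) (hg : 2 ≤ g)
    (h v : Equiv.Perm ℕ)
    (hh : h = ((List.range (g - 1)).map (fun i => Equiv.swap (2 * i + 1) (2 * i + 2))).prod)
    (hv : v = ((List.range (g - 1)).map (fun i => Equiv.swap (2 * i + 2) (2 * i + 3))).prod) :
    (⁅h, v⁆).IsCycle ∧ {x : ℕ | ⁅h, v⁆ x ≠ x} = Set.Icc 1 (2 * g - 1) := by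
  have hg1 : 2 * (g - 1) = 2 * g - 2 := by omega
  have hform : ∀ x, (h * v) x = cfun g x := by
    intro x
    rw [Equiv.Perm.mul_apply, hh, hv, Hprod_apply, Vprod_apply]
    unfold cfun
    split_ifs <;> omega
  have hh2 : h * h = 1 := by
    ext x
    rw [Equiv.Perm.mul_apply, hh, Hprod_apply, Hprod_apply, Equiv.Perm.one_apply]
    split_ifs <;> omega
  have hv2 : v * v = 1 := by
    ext x
    rw [Equiv.Perm.mul_apply, hv, Vprod_apply, Vprod_apply, Equiv.Perm.one_apply]
    split_ifs <;> omega
  have hcomm : ⁅h, v⁆ = (h * v) * (h * v) := by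
    rw [commutatorElement_def, inv_eq_of_mul_eq_one_right hh2,
      inv_eq_of_mul_eq_one_right hv2, mul_assoc (h*v) h v]
  set c : Equiv.Perm ℕ := h * v with hcdef
  have hpow : ∀ k, (c ^ k) 1 = orb g (k % (2*g-1)) := by
    intro k
    induction k with
    | zero => simp [orb]
    | succ k ih =>
      rw [pow_succ', Equiv.Perm.mul_apply, ih,
        orb_step g hg c hform _ (Nat.mod_lt _ (by omega)),
        mod_succ_eq _ _ (by omega)]
  have hmoved : ∀ x, ((c * c) x ≠ x) ↔ (1 ≤ x ∧ x ≤ 2*g-1) := by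
    intro x
    constructor
    · intro hx
      by_contra hcon
      apply hx
      rw [Equiv.Perm.mul_apply, hform, hform]
      unfold cfun
      split_ifs <;> omega
    · rintro ⟨hx1, hx2⟩
      obtain ⟨k, hk, rfl⟩ := orb_surj g hg x hx1 hx2
      rw [Equiv.Perm.mul_apply, orb_step g hg c hform k hk,
        orb_step g hg c hform _ (Nat.mod_lt _ (by omega)),
        mod_succ_eq _ _ (by omega)]
      intro heq
      have hinj := orb_inj g hg (Nat.mod_lt _ (show 0 < 2*g-1 by omega)) hk heq
      have h2 : (k+1+1) % (2*g-1) = k + 2 ∨ (k+1+1) % (2*g-1) + (2*g-1) = k+2 := by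
        rcases Nat.lt_or_ge (k+2) (2*g-1) with hlt | hge
        · exact Or.inl (Nat.mod_eq_of_lt hlt)
        · right
          rw [Nat.mod_eq_sub_mod (by omega), Nat.mod_eq_of_lt (by omega)]
          omega
      omega
  rw [hcomm]
  constructor
  · refine ⟨1, (hmoved 1).mpr ⟨le_rfl, by omega⟩, ?_⟩
    intro y hy
    obtain ⟨hy1, hy2⟩ := (hmoved y).1 hy
    obtain ⟨k, hk, rfl⟩ := orb_surj g hg y hy1 hy2
    refine ⟨(k * g : ℕ), ?_⟩
    rw [zpow_natCast, ← sq, ← pow_mul, hpow]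
    congr 1
    have e : 2 * (k * g) = k + k * (2*g-1) := by
      have h1 : 2*g - 1 + 1 = 2*g := by omega
      calc 2 * (k * g) = k * (2*g-1+1) := by rw [h1]; ring
        _ = k + k * (2*g-1) := by ring
    rw [e, Nat.add_mul_mod_self_right, Nat.mod_eq_of_lt hk]
  · ext x
    simp only [Set.mem_setOf_eq, Set.mem_Icc]
    exact hmoved x
end

section
/- Let g ≥ 2 and let h = (1 3 5 ⋯ 2g−1) and v = (1 2)(3 4)⋯(2g−3 2g−2) be permutations of {1,…,2g−1}. Then the commutator [h,v] is a single cycle of length 2g−1 (i.e. it has no fixed points and is a (2g−1)-cycle). -/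
open scoped commutatorElement

lemma hprod_apply (m : ℕ) : ∀ x : ℕ,
    (((List.range m).map (fun i => Equiv.swap (2 * i + 1) (2 * i + 3))).prod) x =
      if x % 2 = 1 ∧ x < 2 * m + 1 then x + 2
      else if x = 2 * m + 1 ∧ 0 < m then 1 else x := by
  induction m with
  | zero =>
    intro x
    simp only [List.range_zero, List.map_nil, List.prod_nil, Equiv.Perm.coe_one, id_eq]
    split_ifs <;> omega
  | succ m ih =>
    intro x
    rw [List.prod_range_succ, Equiv.Perm.mul_apply, Equiv.swap_apply_def, ih]
    split_ifs <;> omega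

lemma vprod_apply (m : ℕ) : ∀ x : ℕ,
    (((List.range m).map (fun i => Equiv.swap (2 * i + 1) (2 * i + 2))).prod) x =
      if x % 2 = 1 ∧ x < 2 * m then x + 1
      else if x % 2 = 0 ∧ 0 < x ∧ x ≤ 2 * m then x - 1 else x := by
  induction m with
  | zero =>
    intro x
    simp only [List.range_zero, List.map_nil, List.prod_nil, Equiv.Perm.coe_one, id_eq]
    split_ifs <;> omega
  | succ m ih =>
    intro x
    rw [List.prod_range_succ, Equiv.Perm.mul_apply, Equiv.swap_apply_def, ih]
    split_ifs <;> omega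

set_option maxHeartbeats 1000000 in
/-- For `g ≥ 2`, with `h = (1 3 5 ⋯ 2g−1)` and `v = (1 2)(3 4)⋯(2g−3 2g−2)` in
the symmetric group on `{1,…,2g−1}`, the commutator `[h, v]` is a single cycle
of length `2g−1`: it is a cycle and its set of moved points is exactly
`{1, …, 2g−1}` (so it has no fixed points there and is a `(2g−1)`-cycle). -/
theorem commutator_of_odd_perms_isCycle (g : ℕ) (hg : 2 ≤ g)
    (h v : Equiv.Perm ℕ)
    (hh : h = ((List.range (g - 1)).map (fun i => Equiv.swap (2 * i + 1) (2 * i + 3))).prod)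
    (hv : v = ((List.range (g - 1)).map (fun i => Equiv.swap (2 * i + 1) (2 * i + 2))).prod) :
    (⁅h, v⁆).IsCycle ∧ {x : ℕ | ⁅h, v⁆ x ≠ x} = Set.Icc 1 (2 * g - 1) := by
  obtain ⟨n, rfl⟩ : ∃ n, g = n + 2 := ⟨g - 2, by omega⟩
  have hgn : n + 2 - 1 = n + 1 := by omega
  rw [hgn] at hh hv
  have hH : ∀ x, h x = if x % 2 = 1 ∧ x < 2 * n + 3 then x + 2
      else if x = 2 * n + 3 then 1 else x := by
    intro x
    rw [hh, hprod_apply]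
    split_ifs <;> omega
  have hV : ∀ x, v x = if x % 2 = 1 ∧ x < 2 * n + 2 then x + 1
      else if x % 2 = 0 ∧ 0 < x ∧ x ≤ 2 * n + 2 then x - 1 else x := by
    intro x
    rw [hv, vprod_apply]
    split_ifs <;> omega
  have hVV : ∀ x, v (v x) = x := by
    intro x
    rw [hV, hV]
    split_ifs <;> omega
  have hVinv : ∀ x, v⁻¹ x = v x := by
    intro x
    conv_lhs => rw [← hVV x]
    exact v.symm_apply_apply (v x)
  have hHinv : ∀ x, h⁻¹ x =
      if x % 2 = 1 ∧ 2 < x ∧ x ≤ 2 * n + 3 then x - 2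
      else if x = 1 then 2 * n + 3 else x := by
    intro x
    have key : h ((if x % 2 = 1 ∧ 2 < x ∧ x ≤ 2 * n + 3 then x - 2
        else if x = 1 then 2 * n + 3 else x)) = x := by
      rw [hH]
      split_ifs <;> omega
    conv_lhs => rw [← key]
    exact h.symm_apply_apply _
  have s1 : ∀ x, h⁻¹ (v⁻¹ x) =
      if x % 2 = 1 ∧ x < 2 * n + 2 then x + 1
      else if x = 2 then 2 * n + 3
      else if x % 2 = 0 ∧ 4 ≤ x ∧ x ≤ 2 * n + 2 then x - 3
      else if x = 2 * n + 3 then 2 * n + 1 else x := by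
    intro x
    rw [hVinv, hV, hHinv]
    split_ifs <;> omega
  have s2 : ∀ x, v (h⁻¹ (v⁻¹ x)) =
      if x % 2 = 1 ∧ x < 2 * n + 2 then x
      else if x = 2 then 2 * n + 3
      else if x % 2 = 0 ∧ 4 ≤ x ∧ x ≤ 2 * n + 2 then x - 2
      else if x = 2 * n + 3 then 2 * n + 2 else x := by
    intro x
    rw [s1, hV]
    split_ifs <;> omega
  have key : ∀ x, ⁅h, v⁆ x =
      if x % 2 = 1 ∧ x < 2 * n + 3 then x + 2
      else if x = 2 * n + 3 then 2 * n + 2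
      else if x % 2 = 0 ∧ 4 ≤ x ∧ x ≤ 2 * n + 2 then x - 2
      else if x = 2 then 1 else x := by
    intro x
    rw [commutatorElement_def]
    simp only [Equiv.Perm.mul_apply]
    rw [s2, hH]
    split_ifs <;> omega
  have hset : {x : ℕ | ⁅h, v⁆ x ≠ x} = Set.Icc 1 (2 * (n + 2) - 1) := by
    ext x
    simp only [Set.mem_setOf_eq, Set.mem_Icc, key]
    split_ifs <;> omega
  refine ⟨⟨1, ?_, ?_⟩, hset⟩
  · rw [key]
    split_ifs <;> omega
  · intro y hy
    have hmem : y ∈ Set.Icc 1 (2 * (n + 2) - 1) := by rw [← hset]; exact hy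
    simp only [Set.mem_Icc] at hmem
    have pow1 : ∀ k, k ≤ n + 1 → (⁅h, v⁆ ^ k) 1 = 2 * k + 1 := by
      intro k
      induction k with
      | zero => simp
      | succ k ih =>
        intro hk
        rw [pow_succ', Equiv.Perm.mul_apply, ih (by omega), key]
        split_ifs <;> omega
    have pow2 : ∀ m, 1 ≤ m → m ≤ n + 1 → (⁅h, v⁆ ^ (n + 1 + m)) 1 = 2 * (n + 2) - 2 * m := by
      intro m
      induction m with
      | zero => intro h1; omega
      | succ m ih =>
        intro _ hm
        rcases Nat.eq_zero_or_pos m with rfl | hm1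
        · rw [pow_succ', Equiv.Perm.mul_apply, pow1 (n + 1) le_rfl, key]
          split_ifs <;> omega
        · rw [show n + 1 + (m + 1) = (n + 1 + m) + 1 by omega, pow_succ',
            Equiv.Perm.mul_apply, ih hm1 (by omega), key]
          split_ifs <;> omega
    rcases Nat.even_or_odd y with ⟨k, hk⟩ | ⟨k, hk⟩
    · refine ⟨((n + 1 + (n + 2 - k) : ℕ) : ℤ), ?_⟩
      rw [zpow_natCast, pow2 (n + 2 - k) (by omega) (by omega)]
      omega
    · refine ⟨((k : ℕ) : ℤ), ?_⟩
      rw [zpow_natCast, pow1 k (by omega)]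
      omega
end
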